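/- arXiv:2406.13790 — 5 statements merged into one kernel-verified Lean document; each statement's English description precedes it below -/
import Mathlib

section
/- For all integers m ≥ 0 and 0 ≤ ℓ ≤ m, the Boros-Moll coefficient satisfies the recurrence 4(m²+m)(m+1−ℓ)·d_ℓ(m+1) = 2m(8m²+8m−4ℓ²+3)·d_ℓ(m) − (16m²−1)(m+ℓ)·d_ℓ(m−1), where for m = ℓ = 0 the term with d_ℓ(m−1) has coefficient interpreted via the vanishing prefactor (equivalently, the identity holds for all m ≥ 1 and 0 ≤ ℓ ≤ m). -/
/-- The Boros-Moll coefficient `d_ℓ(m)` as a rational number. -/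
def bmQ (l m : ℕ) : ℚ :=
  (1 / (2:ℚ) ^ (2 * m)) *
    ∑ k ∈ Finset.Icc l m,
      (2:ℚ) ^ k * (Nat.choose (2 * m - 2 * k) (m - k)) *
        (Nat.choose (m + k) k) * (Nat.choose k l)

namespace BMaux


def f (l m k : ℕ) : ℚ :=
  (2:ℚ) ^ k * (Nat.choose (2 * m - 2 * k) (m - k)) *
    (Nat.choose (m + k) k) * (Nat.choose k l)

def qq (n l k : ℚ) : ℚ :=
  2*(n+2-l)*k^2 - (4*n^2+10*n+7-2*l)*k + 2*(n+1)*(n+2)*(n+1+l)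

def A0 (n l : ℚ) : ℚ := 4*(4*n+3)*(4*n+5)*(n+1+l)
def A1 (n l : ℚ) : ℚ := 2*(n+1)*(8*(n+1)^2+8*(n+1)-4*l^2+3)
def A2 (n l : ℚ) : ℚ := (n+1)*(n+2)*(n+2-l)

def g (l n k : ℕ) : ℚ :=
  8*((k:ℚ)-l)*(2*(n:ℚ)+1-2*k)*(qq n l k) * f l n k
    / ((((n+1-k : ℕ)):ℚ) * (((n+2-k : ℕ)):ℚ))

set_option maxHeartbeats 2000000 in
lemma term_main (n l k : ℕ) (hl : l ≤ k) (hk : k < n) :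
    A0 n l * f l n k - A1 n l * f l (n+1) k + A2 n l * f l (n+2) k
      = g l n (k+1) - g l n k := by
  obtain ⟨j, rfl⟩ : ∃ j, n = k + j + 1 := ⟨n - k - 1, by omega⟩
  simp only [f, g, qq, A0, A1, A2]
  rw [show 2*(k+j+1) - 2*k = 2*j+2 by omega, show k+j+1 - k = j+1 by omega,
    show k+j+1+k = 2*k+j+1 by omega,
    show 2*(k+j+1+1) - 2*k = 2*j+4 by omega, show k+j+1+1 - k = j+2 by omega,
    show k+j+1+1+k = 2*k+j+2 by omega,
    show 2*(k+j+1+2) - 2*k = 2*j+6 by omega, show k+j+1+2 - k = j+3 by omega,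
    show k+j+1+2+k = 2*k+j+3 by omega,
    show 2*(k+j+1) - 2*(k+1) = 2*j by omega, show k+j+1 - (k+1) = j by omega,
    show k+j+1+(k+1) = 2*k+j+2 by omega,
    show k+j+1+1-(k+1) = j+1 by omega, show k+j+1+2-(k+1) = j+2 by omega]
  -- binomial relations
  have hB1 : ((j:ℚ)+1) * ((2*j+2).choose (j+1) : ℚ)
      = 2*(2*(j:ℚ)+1) * ((2*j).choose j : ℚ) := by
    have h := Nat.succ_mul_centralBinom_succ j
    rw [Nat.centralBinom_eq_two_mul_choose, Nat.centralBinom_eq_two_mul_choose,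
      show 2*(j+1) = 2*j+2 by ring] at h
    exact_mod_cast h
  have hB2 : ((j:ℚ)+2) * ((2*j+4).choose (j+2) : ℚ)
      = 2*(2*(j:ℚ)+3) * ((2*j+2).choose (j+1) : ℚ) := by
    have h := Nat.succ_mul_centralBinom_succ (j+1)
    rw [Nat.centralBinom_eq_two_mul_choose, Nat.centralBinom_eq_two_mul_choose,
      show 2*(j+1+1) = 2*j+4 by ring, show 2*(j+1) = 2*j+2 by ring,
      show j+1+1 = j+2 by ring] at h
    exact_mod_cast h
  have hB3 : ((j:ℚ)+3) * ((2*j+6).choose (j+3) : ℚ)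
      = 2*(2*(j:ℚ)+5) * ((2*j+4).choose (j+2) : ℚ) := by
    have h := Nat.succ_mul_centralBinom_succ (j+2)
    rw [Nat.centralBinom_eq_two_mul_choose, Nat.centralBinom_eq_two_mul_choose,
      show 2*(j+2+1) = 2*j+6 by ring, show 2*(j+2) = 2*j+4 by ring,
      show j+2+1 = j+3 by ring] at h
    exact_mod_cast h
  have hP1 : ((2*k+j+1).choose k : ℚ) * (2*(k:ℚ)+(j:ℚ)+2)
      = ((2*k+j+2).choose k : ℚ) * ((k:ℚ)+(j:ℚ)+2) := by
    have h := Nat.choose_mul_succ_eq (2*k+j+1) k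
    rw [show 2*k+j+1+1 = 2*k+j+2 by ring, show 2*k+j+2-k = k+j+2 by omega] at h
    exact_mod_cast h
  have hP2 : ((2*k+j+2).choose k : ℚ) * (2*(k:ℚ)+(j:ℚ)+3)
      = ((2*k+j+3).choose k : ℚ) * ((k:ℚ)+(j:ℚ)+3) := by
    have h := Nat.choose_mul_succ_eq (2*k+j+2) k
    rw [show 2*k+j+2+1 = 2*k+j+3 by ring, show 2*k+j+3-k = k+j+3 by omega] at h
    exact_mod_cast h
  have hP3 : (2*(k:ℚ)+(j:ℚ)+2) * ((2*k+j+1).choose k : ℚ)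
      = ((2*k+j+2).choose (k+1) : ℚ) * ((k:ℚ)+1) := by
    have h := Nat.add_one_mul_choose_eq (2*k+j+1) k
    rw [show 2*k+j+1+1 = 2*k+j+2 by ring] at h
    exact_mod_cast h
  have hL : ((k.choose l : ℕ) : ℚ) * ((k:ℚ)+1)
      = (((k+1).choose l : ℕ) : ℚ) * ((k:ℚ)+1-(l:ℚ)) := by
    have h := Nat.choose_mul_succ_eq k l
    have h2 : ((k+1-l : ℕ) : ℚ) = (k:ℚ)+1-(l:ℚ) := by
      push_cast [Nat.cast_sub (by omega : l ≤ k+1)]; ring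
    calc ((k.choose l : ℕ) : ℚ) * ((k:ℚ)+1) = (((k+1).choose l) * (k+1-l) : ℕ) := by
          exact_mod_cast congrArg (Nat.cast (R := ℚ)) h
      _ = (((k+1).choose l : ℕ) : ℚ) * ((k:ℚ)+1-(l:ℚ)) := by push_cast [h2]; ring
  -- nonzero facts
  have nz1 : ((j:ℚ)+1) ≠ 0 := by positivity
  have nz2 : ((j:ℚ)+2) ≠ 0 := by positivity
  have nz3 : ((j:ℚ)+3) ≠ 0 := by positivity
  have nz4 : ((k:ℚ)+(j:ℚ)+2) ≠ 0 := by positivity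
  have nz5 : ((k:ℚ)+(j:ℚ)+3) ≠ 0 := by positivity
  have nz6 : ((k:ℚ)+1) ≠ 0 := by positivity
  have nz7 : ((k:ℚ)+1-(l:ℚ)) ≠ 0 := by
    have : (l:ℚ) ≤ (k:ℚ) := by exact_mod_cast hl
    intro h; nlinarith
  -- solve atoms
  have eB3 : ((2*j+6).choose (j+3) : ℚ)
      = 2*(2*(j:ℚ)+5) * ((2*j+4).choose (j+2) : ℚ) / ((j:ℚ)+3) := by
    rw [eq_div_iff nz3]; linear_combination hB3
  have eB2 : ((2*j+4).choose (j+2) : ℚ)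
      = 2*(2*(j:ℚ)+3) * ((2*j+2).choose (j+1) : ℚ) / ((j:ℚ)+2) := by
    rw [eq_div_iff nz2]; linear_combination hB2
  have eB1 : ((2*j+2).choose (j+1) : ℚ)
      = 2*(2*(j:ℚ)+1) * ((2*j).choose j : ℚ) / ((j:ℚ)+1) := by
    rw [eq_div_iff nz1]; linear_combination hB1
  have eP2 : ((2*k+j+3).choose k : ℚ)
      = ((2*k+j+2).choose k : ℚ) * (2*(k:ℚ)+(j:ℚ)+3) / ((k:ℚ)+(j:ℚ)+3) := by
    rw [eq_div_iff nz5]; linear_combination -hP2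
  have eP1 : ((2*k+j+2).choose k : ℚ)
      = ((2*k+j+1).choose k : ℚ) * (2*(k:ℚ)+(j:ℚ)+2) / ((k:ℚ)+(j:ℚ)+2) := by
    rw [eq_div_iff nz4]; linear_combination -hP1
  have eP3 : ((2*k+j+2).choose (k+1) : ℚ)
      = (2*(k:ℚ)+(j:ℚ)+2) * ((2*k+j+1).choose k : ℚ) / ((k:ℚ)+1) := by
    rw [eq_div_iff nz6]; linear_combination -hP3
  have eL : (((k+1).choose l : ℕ) : ℚ)
      = ((k.choose l : ℕ) : ℚ) * ((k:ℚ)+1) / ((k:ℚ)+1-(l:ℚ)) := by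
    rw [eq_div_iff nz7]; linear_combination -hL
  rw [eB3, eB2, eB1, eP2, eP1, eP3, eL]
  push_cast
  field_simp
  ring

def Gt (l n : ℕ) : ℚ :=
  4*((n:ℚ)+1-l)*((n:ℚ)+1)*(2*(n:ℚ)+4*l+1)*2^(n+1) *
    (Nat.choose (2*n+1) (n+1)) * (Nat.choose (n+1) l)

lemma g_at_l (l n : ℕ) : g l n l = 0 := by
  simp [g]

set_option maxHeartbeats 1000000 in
lemma term_top (n l : ℕ) (hl : l ≤ n) :
    A0 n l * f l n n - A1 n l * f l (n+1) n + A2 n l * f l (n+2) n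
      = Gt l n - g l n n := by
  simp only [f, g, Gt, qq, A0, A1, A2]
  rw [show 2*n - 2*n = 0 by omega, show n - n = 0 by omega,
    show n+n = 2*n by omega,
    show 2*(n+1) - 2*n = 2 by omega, show n+1 - n = 1 by omega,
    show n+1+n = 2*n+1 by omega,
    show 2*(n+2) - 2*n = 4 by omega, show n+2 - n = 2 by omega,
    show n+2+n = 2*n+2 by omega,
    show Nat.choose 0 0 = 1 from rfl, show Nat.choose 2 1 = 2 from rfl,
    show Nat.choose 4 2 = 6 from rfl]
  have nz1 : ((n:ℚ)+1) ≠ 0 := by positivity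
  have nz2 : ((n:ℚ)+2) ≠ 0 := by positivity
  have nz3 : ((n:ℚ)+1-(l:ℚ)) ≠ 0 := by
    have : (l:ℚ) ≤ (n:ℚ) := by exact_mod_cast hl
    intro h; nlinarith
  have hsymm : ((2*n+1).choose (n+1) : ℚ) = ((2*n+1).choose n : ℚ) := by
    have h := Nat.choose_symm (show n+1 ≤ 2*n+1 by omega)
    rw [show 2*n+1-(n+1) = n by omega] at h
    exact_mod_cast h.symm
  have hD : ((2*n).choose n : ℚ) * (2*(n:ℚ)+1) = ((2*n+1).choose n : ℚ) * ((n:ℚ)+1) := by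
    have h := Nat.choose_mul_succ_eq (2*n) n
    rw [show 2*n+1-n = n+1 by omega] at h
    exact_mod_cast h
  have hE : ((2*n+1).choose n : ℚ) * (2*(n:ℚ)+2) = ((2*n+2).choose n : ℚ) * ((n:ℚ)+2) := by
    have h := Nat.choose_mul_succ_eq (2*n+1) n
    rw [show 2*n+1+1 = 2*n+2 by ring, show 2*n+2-n = n+2 by omega] at h
    exact_mod_cast h
  have hL : ((n.choose l : ℕ) : ℚ) * ((n:ℚ)+1) = (((n+1).choose l : ℕ) : ℚ) * ((n:ℚ)+1-(l:ℚ)) := by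
    have h := Nat.choose_mul_succ_eq n l
    have h2 : ((n+1-l : ℕ) : ℚ) = (n:ℚ)+1-(l:ℚ) := by
      push_cast [Nat.cast_sub (by omega : l ≤ n+1)]; ring
    calc ((n.choose l : ℕ) : ℚ) * ((n:ℚ)+1) = (((n+1).choose l) * (n+1-l) : ℕ) := by
          exact_mod_cast congrArg (Nat.cast (R := ℚ)) h
      _ = (((n+1).choose l : ℕ) : ℚ) * ((n:ℚ)+1-(l:ℚ)) := by push_cast [h2]; ring
  have eE : ((2*n+2).choose n : ℚ) = ((2*n+1).choose n : ℚ) * (2*(n:ℚ)+2) / ((n:ℚ)+2) := by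
    rw [eq_div_iff nz2]; linear_combination -hE
  have eD : ((2*n+1).choose n : ℚ) = ((2*n).choose n : ℚ) * (2*(n:ℚ)+1) / ((n:ℚ)+1) := by
    rw [eq_div_iff nz1]; linear_combination -hD
  have eL : (((n+1).choose l : ℕ) : ℚ) = ((n.choose l : ℕ) : ℚ) * ((n:ℚ)+1) / ((n:ℚ)+1-(l:ℚ)) := by
    rw [eq_div_iff nz3]; linear_combination -hL
  rw [hsymm, eE, eD, eL]
  push_cast
  field_simp
  ring

set_option maxHeartbeats 1000000 in
lemma boundary (n l : ℕ) (hl : l ≤ n+1) :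
    Gt l n = A1 n l * f l (n+1) (n+1)
      - A2 n l * (f l (n+2) (n+1) + f l (n+2) (n+2)) := by
  simp only [f, Gt, A1, A2]
  rw [show 2*(n+1) - 2*(n+1) = 0 by omega, show n+1 - (n+1) = 0 by omega,
    show n+1+(n+1) = 2*n+2 by omega,
    show 2*(n+2) - 2*(n+1) = 2 by omega, show n+2 - (n+1) = 1 by omega,
    show n+2+(n+1) = 2*n+3 by omega,
    show 2*(n+2) - 2*(n+2) = 0 by omega, show n+2 - (n+2) = 0 by omega,
    show n+2+(n+2) = 2*n+4 by omega,
    show Nat.choose 0 0 = 1 from rfl, show Nat.choose 2 1 = 2 from rfl]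
  have nz2 : ((n:ℚ)+2) ≠ 0 := by positivity
  have nz4 : ((n:ℚ)+2-(l:ℚ)) ≠ 0 := by
    have : (l:ℚ) ≤ (n:ℚ)+1 := by exact_mod_cast hl
    intro h; nlinarith
  have hU : ((2*n+2).choose (n+1) : ℚ) = 2 * ((2*n+1).choose (n+1) : ℚ) := by
    have h1 : (2*n+2).choose (n+1) = (2*n+1).choose n + (2*n+1).choose (n+1) := by
      rw [show 2*n+2 = (2*n+1)+1 by ring]
      exact Nat.choose_succ_succ (2*n+1) n
    have h2 := Nat.choose_symm (show n+1 ≤ 2*n+1 by omega)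
    rw [show 2*n+1-(n+1) = n by omega] at h2
    have : (2*n+2).choose (n+1) = 2 * (2*n+1).choose (n+1) := by omega
    exact_mod_cast this
  have hV : ((2*n+2).choose (n+1) : ℚ) * (2*(n:ℚ)+3) = ((2*n+3).choose (n+1) : ℚ) * ((n:ℚ)+2) := by
    have h := Nat.choose_mul_succ_eq (2*n+2) (n+1)
    rw [show 2*n+2+1 = 2*n+3 by ring, show 2*n+3-(n+1) = n+2 by omega] at h
    exact_mod_cast h
  have hW : ((n:ℚ)+2) * ((2*n+4).choose (n+2) : ℚ) = 2*(2*(n:ℚ)+3) * ((2*n+2).choose (n+1) : ℚ) := by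
    have h := Nat.succ_mul_centralBinom_succ (n+1)
    rw [Nat.centralBinom_eq_two_mul_choose, Nat.centralBinom_eq_two_mul_choose,
      show 2*(n+1+1) = 2*n+4 by ring, show 2*(n+1) = 2*n+2 by ring,
      show n+1+1 = n+2 by ring] at h
    exact_mod_cast h
  have hL2 : (((n+1).choose l : ℕ) : ℚ) * ((n:ℚ)+2) = (((n+2).choose l : ℕ) : ℚ) * ((n:ℚ)+2-(l:ℚ)) := by
    have h := Nat.choose_mul_succ_eq (n+1) l
    have h2 : ((n+1+1-l : ℕ) : ℚ) = (n:ℚ)+2-(l:ℚ) := by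
      push_cast [Nat.cast_sub (by omega : l ≤ n+1+1)]; ring
    calc (((n+1).choose l : ℕ) : ℚ) * ((n:ℚ)+2)
        = (((n+1+1).choose l) * (n+1+1-l) : ℕ) := by
          push_cast
          exact_mod_cast congrArg (Nat.cast (R := ℚ)) h
      _ = (((n+2).choose l : ℕ) : ℚ) * ((n:ℚ)+2-(l:ℚ)) := by
          rw [show n+1+1 = n+2 by ring]; push_cast [h2]; ring
  have eV : ((2*n+3).choose (n+1) : ℚ) = ((2*n+2).choose (n+1) : ℚ) * (2*(n:ℚ)+3) / ((n:ℚ)+2) := by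
    rw [eq_div_iff nz2]; linear_combination -hV
  have eW : ((2*n+4).choose (n+2) : ℚ) = 2*(2*(n:ℚ)+3) * ((2*n+2).choose (n+1) : ℚ) / ((n:ℚ)+2) := by
    rw [eq_div_iff nz2]; linear_combination hW
  have eL2 : (((n+2).choose l : ℕ) : ℚ) = (((n+1).choose l : ℕ) : ℚ) * ((n:ℚ)+2) / ((n:ℚ)+2-(l:ℚ)) := by
    rw [eq_div_iff nz4]; linear_combination -hL2
  rw [eV, eW, eL2, hU]
  push_cast
  field_simp
  ring

def S (l m : ℕ) : ℚ := ∑ k ∈ Finset.Icc l m, f l m k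

lemma bmQ_eq (l m : ℕ) : bmQ l m = (1 / (2:ℚ) ^ (2 * m)) * S l m := rfl

def G (l n k : ℕ) : ℚ := if k ≤ n then g l n k else Gt l n

lemma tel (F : ℕ → ℚ) : ∀ a b : ℕ, a ≤ b →
    ∑ k ∈ Finset.Icc a b, (F (k+1) - F k) = F (b+1) - F a := by
  intro a b
  induction b with
  | zero => intro h; interval_cases a; simp
  | succ b ih =>
    intro h
    rcases Nat.lt_or_ge a (b+1) with h' | h'
    · rw [← Finset.insert_Icc_right_eq_Icc_add_one (by omega : a ≤ b + 1),
        Finset.sum_insert (by simp), ih (by omega)]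
      ring
    · have : a = b + 1 := by omega
      subst this
      simp

lemma sum_identity (n l : ℕ) (hl : l ≤ n+1) :
    A0 n l * S l n - A1 n l * S l (n+1) + A2 n l * S l (n+2) = 0 := by
  have bnd := boundary n l hl
  rcases Nat.lt_or_ge l (n+1) with hln | hln
  · -- l ≤ n
    have hln' : l ≤ n := by omega
    have h1 : S l (n+1) = f l (n+1) (n+1) + ∑ k ∈ Finset.Icc l n, f l (n+1) k := by
      rw [S, ← Finset.insert_Icc_right_eq_Icc_add_one (by omega : l ≤ n + 1),
        Finset.sum_insert (by simp)]
    have h2 : S l (n+2) = f l (n+2) (n+2) + (f l (n+2) (n+1) + ∑ k ∈ Finset.Icc l n, f l (n+2) k) := by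
      rw [S, show n+2 = (n+1)+1 by ring,
        ← Finset.insert_Icc_right_eq_Icc_add_one (by omega : l ≤ n+1+1),
        Finset.sum_insert (by simp),
        ← Finset.insert_Icc_right_eq_Icc_add_one (by omega : l ≤ n+1),
        Finset.sum_insert (by simp), show (n+1)+1 = n+2 by ring]
    have hG : ∀ k ∈ Finset.Icc l n,
        A0 n l * f l n k - A1 n l * f l (n+1) k + A2 n l * f l (n+2) k
          = G l n (k+1) - G l n k := by
      intro k hk
      rw [Finset.mem_Icc] at hk
      rcases Nat.lt_or_ge k n with hkn | hkn
      · simp only [G]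
        rw [if_pos (show k+1 ≤ n by omega), if_pos (show k ≤ n by omega)]
        exact term_main n l k hk.1 hkn
      · have hkn2 : k = n := by omega
        subst hkn2
        simp only [G]
        rw [if_neg (show ¬ k+1 ≤ k by omega), if_pos (show k ≤ k from le_rfl)]
        exact term_top k l hln'
    have hsum : A0 n l * (∑ k ∈ Finset.Icc l n, f l n k)
        - A1 n l * (∑ k ∈ Finset.Icc l n, f l (n+1) k)
        + A2 n l * (∑ k ∈ Finset.Icc l n, f l (n+2) k) = Gt l n := by
      rw [Finset.mul_sum, Finset.mul_sum, Finset.mul_sum, ← Finset.sum_sub_distrib,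
        ← Finset.sum_add_distrib, Finset.sum_congr rfl hG, tel (G l n) l n hln']
      simp only [G]
      rw [if_neg (show ¬ n+1 ≤ n by omega), if_pos (show l ≤ n from hln'), g_at_l]
      ring
    rw [S, h1, h2]
    linear_combination hsum + bnd
  · -- l = n+1
    have : l = n+1 := by omega
    subst this
    have h0 : S (n+1) n = 0 := by
      rw [S, Finset.Icc_eq_empty (by omega)]; simp
    have h1 : S (n+1) (n+1) = f (n+1) (n+1) (n+1) := by
      rw [S, Finset.Icc_self, Finset.sum_singleton]
    have h2 : S (n+1) (n+2) = f (n+1) (n+2) (n+2) + f (n+1) (n+2) (n+1) := by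
      rw [S, show n+2 = (n+1)+1 by ring,
        ← Finset.insert_Icc_right_eq_Icc_add_one (by omega : n+1 ≤ n+1+1),
        Finset.sum_insert (by simp), Finset.Icc_self, Finset.sum_singleton,
        show (n+1)+1 = n+2 by ring]
    have hGt0 : Gt (n+1) n = 0 := by
      simp only [Gt]
      push_cast
      ring
    rw [h0, h1, h2]
    linear_combination bnd - hGt0


end BMaux

open BMaux in
theorem stmt_0 (m l : ℕ) (hm : 1 ≤ m) (hl : l ≤ m) :
    4 * ((m:ℚ)^2 + m) * ((m:ℚ) + 1 - l) * bmQ l (m+1) =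
      2 * (m:ℚ) * (8*(m:ℚ)^2 + 8*m - 4*(l:ℚ)^2 + 3) * bmQ l m
        - (16*(m:ℚ)^2 - 1) * ((m:ℚ) + l) * bmQ l (m-1) := by
  obtain ⟨n, rfl⟩ : ∃ n, m = n+1 := ⟨m-1, by omega⟩
  have key := sum_identity n l hl
  rw [show n+1-1 = n from rfl, show n+1+1 = n+2 from rfl,
    bmQ_eq l (n+2), bmQ_eq l (n+1), bmQ_eq l n]
  simp only [A0, A1, A2] at key
  push_cast at key ⊢
  have hX : (2:ℚ)^(2*n) ≠ 0 := by positivity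
  rw [show (2:ℚ)^(2*(n+2)) = 16 * 2^(2*n) by ring,
    show (2:ℚ)^(2*(n+1)) = 4 * 2^(2*n) by ring]
  field_simp
  linear_combination 16 * key
end

section
/- For all integers m ≥ 0 and 0 ≤ ℓ ≤ m−1, 2(m+1)(m+1−ℓ)·d_ℓ(m+1) = (4m−2ℓ+3)(m+ℓ+1)·d_ℓ(m) − 2ℓ(ℓ+1)·d_{ℓ+1}(m). -/
open Finset Nat

private lemma cbe (n m k : ℕ) (h1 : 2*n = m) (h2 : n = k) : Nat.centralBinom n = m.choose k := by
  subst h1 h2; rfl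

private lemma hA (w : ℕ) : (((2*w+4).choose (w+2) : ℚ)) * ((w:ℚ)+2) = 2*(2*(w:ℚ)+3) * ((2*w+2).choose (w+1)) := by
  have h := Nat.succ_mul_centralBinom_succ (w+1)
  rw [cbe (w+1+1) (2*w+4) (w+2) (by omega) (by omega), cbe (w+1) (2*w+2) (w+1) (by omega) rfl] at h
  have := congrArg (fun n : ℕ => (n : ℚ)) h
  push_cast at this
  linarith

private lemma hC1 (w : ℕ) : ((w:ℚ)+2) * (catalan (w+1)) = ((2*w+2).choose (w+1) : ℚ) := by
  have h := succ_mul_catalan_eq_centralBinom (w+1)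
  rw [cbe (w+1) (2*w+2) (w+1) (by omega) rfl] at h
  have := congrArg (fun n : ℕ => (n : ℚ)) h
  push_cast at this
  linarith

private lemma hC0 (w : ℕ) : 2*(2*(w:ℚ)+1) * (catalan w) = ((2*w+2).choose (w+1) : ℚ) := by
  have h1 := succ_mul_catalan_eq_centralBinom w
  have h2 := Nat.succ_mul_centralBinom_succ w
  rw [cbe (w+1) (2*w+2) (w+1) (by omega) rfl] at h2
  have e1 := congrArg (fun n : ℕ => (n : ℚ)) h1
  have e2 := congrArg (fun n : ℕ => (n : ℚ)) h2
  push_cast at e1 e2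
  have hw : ((w:ℚ)+1) ≠ 0 := by positivity
  apply mul_left_cancel₀ hw
  calc ((w:ℚ)+1) * (2*(2*(w:ℚ)+1) * (catalan w))
      = 2*(2*(w:ℚ)+1) * (((w:ℚ)+1) * (catalan w)) := by ring
    _ = 2*(2*(w:ℚ)+1) * (Nat.centralBinom w : ℚ) := by rw [e1]
    _ = ((w:ℚ)+1) * (((2*w+2).choose (w+1) : ℚ)) := by linarith

private lemma core1 (l i w : ℕ) :
    ((l:ℚ)+i+w+2) * ((i:ℚ)+(w:ℚ)+2) *
      (2^(l+i) * ((2*w+4).choose (w+2) : ℚ) * ((2*l+2*i+w+2).choose (l+i) : ℚ) * ((l+i).choose l : ℚ))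
    = (2*(2*(l:ℚ)+4*i+4*w+7)*(2*(l:ℚ)+i+w+2) - 4*(l:ℚ)*(i:ℚ)) *
      (2^(l+i) * ((2*w+2).choose (w+1) : ℚ) * ((2*l+2*i+w+1).choose (l+i) : ℚ) * ((l+i).choose l : ℚ))
    + ( -4*((l:ℚ)+i+w+2)*((i:ℚ)+1)*(2*(w:ℚ)+1) *
          (2^(l+i+1) * (catalan w : ℚ) * ((2*l+2*i+w+2).choose (l+i+1) : ℚ) * ((l+i+1).choose l : ℚ))
      - (-4*((l:ℚ)+i+w+2)*(i:ℚ)*(2*(w:ℚ)+3) *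
          (2^(l+i) * (catalan (w+1) : ℚ) * ((2*l+2*i+w+1).choose (l+i) : ℚ) * ((l+i).choose l : ℚ))) ) := by
  have hw2 : ((w:ℚ)+2) ≠ 0 := by positivity
  have hliw : ((l:ℚ)+i+w+2) ≠ 0 := by positivity
  have hli1 : ((l:ℚ)+i+1) ≠ 0 := by positivity
  have hi1 : ((i:ℚ)+1) ≠ 0 := by positivity
  have rY2 : ((2*l+2*i+w+2).choose (l+i) : ℚ) * ((l:ℚ)+i+w+2)
      = ((2*l+2*i+w+1).choose (l+i) : ℚ) * (2*(l:ℚ)+2*i+w+2) := by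
    have h := Nat.choose_mul_succ_eq (2*l+2*i+w+1) (l+i)
    rw [show 2*l+2*i+w+1+1 = 2*l+2*i+w+2 by omega, show (2*l+2*i+w+2)-(l+i) = l+i+w+2 by omega] at h
    have := congrArg (fun n : ℕ => (n : ℚ)) h
    push_cast at this; linarith
  have rY2' : ((2*l+2*i+w+2).choose (l+i+1) : ℚ) * ((l:ℚ)+i+1)
      = ((2*l+2*i+w+2).choose (l+i) : ℚ) * ((l:ℚ)+i+w+2) := by
    have h := Nat.choose_succ_right_eq (2*l+2*i+w+2) (l+i)
    rw [show (2*l+2*i+w+2)-(l+i) = l+i+w+2 by omega] at h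
    have := congrArg (fun n : ℕ => (n : ℚ)) h
    push_cast at this; linarith
  have rZ' : ((l+i+1).choose l : ℚ) * ((i:ℚ)+1) = ((l+i).choose l : ℚ) * ((l:ℚ)+i+1) := by
    have h := Nat.choose_mul_succ_eq (l+i) l
    rw [show (l+i+1)-l = i+1 by omega] at h
    have := congrArg (fun n : ℕ => (n : ℚ)) h
    push_cast at this; linarith
  have eX4 : ((2*w+4).choose (w+2) : ℚ) = 2*(2*(w:ℚ)+3) * ((2*w+2).choose (w+1)) / ((w:ℚ)+2) := by
    rw [eq_div_iff hw2]; exact hA w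
  have eC1 : (catalan (w+1) : ℚ) = ((2*w+2).choose (w+1) : ℚ) / ((w:ℚ)+2) := by
    rw [eq_div_iff hw2]; linear_combination hC1 w
  have eC0 : (catalan w : ℚ) = ((2*w+2).choose (w+1) : ℚ) / (2*(2*(w:ℚ)+1)) := by
    rw [eq_div_iff (by positivity)]; linear_combination hC0 w
  have eY2' : ((2*l+2*i+w+2).choose (l+i+1) : ℚ)
      = ((2*l+2*i+w+1).choose (l+i) : ℚ) * (2*(l:ℚ)+2*i+w+2) / ((l:ℚ)+i+1) := by
    rw [eq_div_iff hli1]; linear_combination rY2' + rY2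
  have eY2 : ((2*l+2*i+w+2).choose (l+i) : ℚ)
      = ((2*l+2*i+w+1).choose (l+i) : ℚ) * (2*(l:ℚ)+2*i+w+2) / ((l:ℚ)+i+w+2) := by
    rw [eq_div_iff hliw]; exact rY2
  have eZ' : ((l+i+1).choose l : ℚ) = ((l+i).choose l : ℚ) * ((l:ℚ)+i+1) / ((i:ℚ)+1) := by
    rw [eq_div_iff hi1]; exact rZ'
  rw [eX4, eC1, eC0, eY2', eY2, eZ', pow_succ]
  field_simp
  ring

private lemma core2 (l i : ℕ) :
    ((l:ℚ)+i+1) * ((i:ℚ)+1) * (2^(l+i) * 2 * ((2*l+2*i+1).choose (l+i) : ℚ) * ((l+i).choose l : ℚ))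
    = (2*(2*(l:ℚ)+4*i+3)*(2*(l:ℚ)+i+1) - 4*(l:ℚ)*(i:ℚ)) *
        (2^(l+i) * ((2*l+2*i).choose (l+i) : ℚ) * ((l+i).choose l : ℚ))
    + ( -((l:ℚ)+i+1)*((i:ℚ)+1)*2^(l+i+1) * ((2*l+2*i+2).choose (l+i+1) : ℚ) * ((l+i+1).choose l : ℚ)
      - (-4*((l:ℚ)+i+1)*(i:ℚ) * (2^(l+i) * ((2*l+2*i).choose (l+i) : ℚ) * ((l+i).choose l : ℚ))) ) := by
  have hli1 : ((l:ℚ)+i+1) ≠ 0 := by positivity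
  have hi1 : ((i:ℚ)+1) ≠ 0 := by positivity
  have rQ : ((2*l+2*i+1).choose (l+i) : ℚ) * ((l:ℚ)+i+1)
      = ((2*l+2*i).choose (l+i) : ℚ) * (2*(l:ℚ)+2*i+1) := by
    have h := Nat.choose_mul_succ_eq (2*l+2*i) (l+i)
    rw [show (2*l+2*i+1)-(l+i) = l+i+1 by omega] at h
    have := congrArg (fun n : ℕ => (n : ℚ)) h
    push_cast at this; linarith
  have rCB : ((2*l+2*i+2).choose (l+i+1) : ℚ) * ((l:ℚ)+i+1)
      = 2*(2*(l:ℚ)+2*i+1) * ((2*l+2*i).choose (l+i) : ℚ) := by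
    have h := Nat.succ_mul_centralBinom_succ (l+i)
    rw [cbe (l+i+1) (2*l+2*i+2) (l+i+1) (by omega) rfl, cbe (l+i) (2*l+2*i) (l+i) (by omega) rfl] at h
    have := congrArg (fun n : ℕ => (n : ℚ)) h
    push_cast at this; linarith
  have rZ1 : ((l+i+1).choose l : ℚ) * ((i:ℚ)+1) = ((l+i).choose l : ℚ) * ((l:ℚ)+i+1) := by
    have h := Nat.choose_mul_succ_eq (l+i) l
    rw [show (l+i+1)-l = i+1 by omega] at h
    have := congrArg (fun n : ℕ => (n : ℚ)) h
    push_cast at this; linarith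
  have eQ : ((2*l+2*i+1).choose (l+i) : ℚ)
      = ((2*l+2*i).choose (l+i) : ℚ) * (2*(l:ℚ)+2*i+1) / ((l:ℚ)+i+1) := by
    rw [eq_div_iff hli1]; exact rQ
  have eCB : ((2*l+2*i+2).choose (l+i+1) : ℚ)
      = 2*(2*(l:ℚ)+2*i+1) * ((2*l+2*i).choose (l+i) : ℚ) / ((l:ℚ)+i+1) := by
    rw [eq_div_iff hli1]; exact rCB
  have eZ1 : ((l+i+1).choose l : ℚ) = ((l+i).choose l : ℚ) * ((l:ℚ)+i+1) / ((i:ℚ)+1) := by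
    rw [eq_div_iff hi1]; exact rZ1
  rw [eQ, eCB, eZ1, pow_succ]
  field_simp
  ring

/-- The WZ-style certificate function. -/
noncomputable def Tc (m l : ℕ) : ℕ → ℚ := fun k =>
  if k ≤ m then
    -4*((m:ℚ)+1)*((k:ℚ)-(l:ℚ))*(2*(m:ℚ)+1-2*(k:ℚ))*2^k*(catalan (m-k) : ℚ)
      *((m+k).choose k : ℚ)*(k.choose l : ℚ)
  else
    -(((m:ℚ)+1)*((m:ℚ)+1-(l:ℚ)))*2^(m+1)*((2*m+2).choose (m+1) : ℚ)*((m+1).choose l : ℚ)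

private lemma telesc (f : ℕ → ℚ) (a : ℕ) : ∀ b, a ≤ b →
    ∑ k ∈ Icc a b, (f (k+1) - f k) = f (b+1) - f a := by
  intro b
  induction b with
  | zero => intro h; interval_cases a; simp
  | succ n ih =>
    intro h
    rcases Nat.lt_or_ge a (n+1) with h1 | h2
    · rw [Finset.sum_Icc_succ_top (by omega : a ≤ n+1), ih (by omega)]
      ring
    · have : a = n+1 := by omega
      subst this
      simp

private lemma key (m l : ℕ) : ∀ k ∈ Icc l m,
    ((m:ℚ)+1)*((m:ℚ)+1-l)*((2:ℚ)^k * ((2*(m+1)-2*k).choose ((m+1)-k) : ℚ)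
        * (((m+1)+k).choose k : ℚ) * (k.choose l : ℚ))
    = (2*(4*(m:ℚ)-2*l+3)*((m:ℚ)+l+1) - 4*(l:ℚ)*((k:ℚ)-l)) *
        ((2:ℚ)^k * ((2*m-2*k).choose (m-k) : ℚ) * ((m+k).choose k : ℚ) * (k.choose l : ℚ))
      + (Tc m l (k+1) - Tc m l k) := by
  intro k hk
  rw [mem_Icc] at hk
  obtain ⟨i, rfl⟩ : ∃ i, k = l + i := ⟨k - l, by omega⟩
  rcases eq_or_lt_of_le hk.2 with heq | hlt
  · subst heq
    simp only [Tc]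
    rw [if_pos (le_refl _), if_neg (by omega)]
    rw [show 2*(l+i+1)-2*(l+i) = 2 by omega, show (l+i+1)-(l+i) = 1 by omega,
        show (l+i+1)+(l+i) = 2*l+2*i+1 by omega,
        show 2*(l+i)-2*(l+i) = 0 by omega, show (l+i)-(l+i) = 0 by omega,
        show (l+i)+(l+i) = 2*l+2*i by omega,
        show 2*(l+i)+2 = 2*l+2*i+2 by omega]
    rw [show Nat.choose 2 1 = 2 from rfl, show Nat.choose 0 0 = 1 from rfl, catalan_zero]
    push_cast
    linear_combination core2 l i
  · obtain ⟨w, rfl⟩ : ∃ w, m = l+i+(w+1) := ⟨m-(l+i)-1, by omega⟩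
    simp only [Tc]
    rw [if_pos (by omega), if_pos (by omega)]
    rw [show 2*(l+i+(w+1)+1)-2*(l+i) = 2*w+4 by omega,
        show (l+i+(w+1)+1)-(l+i) = w+2 by omega,
        show (l+i+(w+1)+1)+(l+i) = 2*l+2*i+w+2 by omega,
        show 2*(l+i+(w+1))-2*(l+i) = 2*w+2 by omega,
        show (l+i+(w+1))-(l+i) = w+1 by omega,
        show (l+i+(w+1))+(l+i) = 2*l+2*i+w+1 by omega,
        show (l+i+(w+1))-(l+i+1) = w by omega,
        show (l+i+(w+1))+(l+i+1) = 2*l+2*i+w+2 by omega]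
    push_cast
    linear_combination core1 l i w

private lemma main_sum (m l : ℕ) (hlm : l + 1 ≤ m) :
    2*((m:ℚ)+1)*((m:ℚ)+1-l) *
      (∑ k ∈ Icc l (m+1), (2:ℚ)^k * ((2*(m+1)-2*k).choose ((m+1)-k) : ℚ)
          * (((m+1)+k).choose k : ℚ) * (k.choose l : ℚ))
    = 4*((4*(m:ℚ)-2*l+3)*((m:ℚ)+l+1) *
          (∑ k ∈ Icc l m, (2:ℚ)^k * ((2*m-2*k).choose (m-k) : ℚ)
              * ((m+k).choose k : ℚ) * (k.choose l : ℚ))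
        - 2*(l:ℚ)*((l:ℚ)+1) *
          (∑ k ∈ Icc (l+1) m, (2:ℚ)^k * ((2*m-2*k).choose (m-k) : ℚ)
              * ((m+k).choose k : ℚ) * (k.choose (l+1) : ℚ))) := by
  have hm : l ≤ m := by omega
  rw [Finset.sum_Icc_succ_top (by omega : l ≤ m+1)]
  have e1 : ((m:ℚ)+1)*((m:ℚ)+1-l) *
      (∑ k ∈ Icc l m, (2:ℚ)^k * ((2*(m+1)-2*k).choose ((m+1)-k) : ℚ)
          * (((m+1)+k).choose k : ℚ) * (k.choose l : ℚ))
      = (∑ k ∈ Icc l m, (2*(4*(m:ℚ)-2*l+3)*((m:ℚ)+l+1) - 4*(l:ℚ)*((k:ℚ)-l)) *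
            ((2:ℚ)^k * ((2*m-2*k).choose (m-k) : ℚ) * ((m+k).choose k : ℚ) * (k.choose l : ℚ)))
        + (Tc m l (m+1) - Tc m l l) := by
    rw [Finset.mul_sum, ← telesc (Tc m l) l m hm, ← Finset.sum_add_distrib]
    exact Finset.sum_congr rfl (key m l)
  have e2 : (∑ k ∈ Icc l m, (2*(4*(m:ℚ)-2*l+3)*((m:ℚ)+l+1) - 4*(l:ℚ)*((k:ℚ)-l)) *
            ((2:ℚ)^k * ((2*m-2*k).choose (m-k) : ℚ) * ((m+k).choose k : ℚ) * (k.choose l : ℚ)))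
      = 2*(4*(m:ℚ)-2*l+3)*((m:ℚ)+l+1) *
          (∑ k ∈ Icc l m, (2:ℚ)^k * ((2*m-2*k).choose (m-k) : ℚ)
              * ((m+k).choose k : ℚ) * (k.choose l : ℚ))
        - 4*(l:ℚ) * (∑ k ∈ Icc l m, ((k:ℚ)-l) *
            ((2:ℚ)^k * ((2*m-2*k).choose (m-k) : ℚ) * ((m+k).choose k : ℚ) * (k.choose l : ℚ))) := by
    rw [Finset.mul_sum, Finset.mul_sum, ← Finset.sum_sub_distrib]
    exact Finset.sum_congr rfl (fun k _ => by ring)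
  have hTl : Tc m l l = 0 := by
    simp only [Tc]; rw [if_pos hm]; ring
  have hTm1 : Tc m l (m+1)
      = -(((m:ℚ)+1)*((m:ℚ)+1-l)) * ((2:ℚ)^(m+1) * ((2*(m+1)-2*(m+1)).choose ((m+1)-(m+1)) : ℚ)
          * (((m+1)+(m+1)).choose (m+1) : ℚ) * ((m+1).choose l : ℚ)) := by
    simp only [Tc]; rw [if_neg (by omega)]
    rw [show 2*(m+1)-2*(m+1) = 0 by omega, show (m+1)-(m+1) = 0 by omega,
        show (m+1)+(m+1) = 2*m+2 by omega, show Nat.choose 0 0 = 1 from rfl]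
    push_cast; ring
  have hb : ((l:ℚ)+1) * (∑ k ∈ Icc (l+1) m, (2:ℚ)^k * ((2*m-2*k).choose (m-k) : ℚ)
        * ((m+k).choose k : ℚ) * (k.choose (l+1) : ℚ))
      = ∑ k ∈ Icc l m, ((k:ℚ)-l) *
          ((2:ℚ)^k * ((2*m-2*k).choose (m-k) : ℚ) * ((m+k).choose k : ℚ) * (k.choose l : ℚ)) := by
    rw [Finset.mul_sum, show Icc (l+1) m = Ioc l m from Finset.Icc_add_one_left_eq_Ioc l m,
        show Icc l m = insert l (Ioc l m) from (Finset.Ioc_insert_left hm).symm,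
        Finset.sum_insert (by simp)]
    have h0 : ((l:ℚ)-(l:ℚ)) * ((2:ℚ)^l * ((2*m-2*l).choose (m-l) : ℚ)
        * ((m+l).choose l : ℚ) * (l.choose l : ℚ)) = 0 := by ring
    rw [h0, zero_add]
    refine Finset.sum_congr rfl ?_
    intro k hk
    rw [mem_Ioc] at hk
    have h := Nat.choose_succ_right_eq k l
    have hc := congrArg (fun n : ℕ => (n : ℚ)) h
    push_cast at hc
    rw [Nat.cast_sub (le_of_lt hk.1)] at hc
    linear_combination ((2:ℚ)^k * ((2*m-2*k).choose (m-k) : ℚ) * ((m+k).choose k : ℚ)) * hc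
  linear_combination 2*e1 + 2*e2 + 2*hTm1 - 2*hTl + 8*(l:ℚ)*hb

theorem stmt_2 (m l : ℕ) (hlm : l + 1 ≤ m) :
    2 * ((m:ℚ) + 1) * ((m:ℚ) + 1 - l) * bmQ l (m+1) =
      (4*(m:ℚ) - 2*l + 3) * ((m:ℚ) + l + 1) * bmQ l m
        - 2 * (l:ℚ) * ((l:ℚ) + 1) * bmQ (l+1) m := by
  have hpow : (1:ℚ)/2^(2*(m+1)) = 1/2^(2*m) * (1/4) := by
    rw [show 2*(m+1) = 2*m+2 by ring, pow_add]
    norm_num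
    ring
  simp only [bmQ]
  rw [hpow]
  linear_combination ((1/((2:ℚ)^(2*m))) * (1/4)) * main_sum m l hlm
end

section
/- For integers ℓ ≥ 1 and m ≥ ℓ+1, d_{ℓ+1}(m)/d_ℓ(m) < (m(2m+1)(2ℓ+3) + √Δ₁) / (4m(ℓ²+ℓ)), where Δ₁ = 52m⁴ + (64ℓ²+56)m³ + (16ℓ⁴+36ℓ²+13)m² − 8ℓ²m − 4ℓ². -/
/-- The Boros-Moll coefficient `d_ℓ(m)` as a real number. -/
noncomputable def bmR (l m : ℕ) : ℝ :=
  (1 / (2:ℝ) ^ (2 * m)) *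
    ∑ k ∈ Finset.Icc l m,
      (2:ℝ) ^ k * (Nat.choose (2 * m - 2 * k) (m - k)) *
        (Nat.choose (m + k) k) * (Nat.choose k l)

/-- Natural-number version of the Boros-Moll sum. -/
def bmN (l m : ℕ) : ℕ :=
  ∑ k ∈ Finset.Icc l m,
    2 ^ k * (Nat.choose (2 * m - 2 * k) (m - k)) * (Nat.choose (m + k) k) * (Nat.choose k l)

lemma bmR_eq (l m : ℕ) : bmR l m = (bmN l m : ℝ) / 2 ^ (2 * m) := by
  unfold bmR bmN
  push_cast
  ring

lemma bmN_pos (l m : ℕ) (h : l ≤ m) : 0 < bmN l m := by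
  unfold bmN
  have hmem : l ∈ Finset.Icc l m := Finset.mem_Icc.mpr ⟨le_refl l, h⟩
  refine Finset.sum_pos' (fun i _ => Nat.zero_le _) ⟨l, hmem, ?_⟩
  have h1 : 0 < Nat.choose (2 * m - 2 * l) (m - l) := Nat.choose_pos (by omega)
  have h2 : 0 < Nat.choose (m + l) l := Nat.choose_pos (by omega)
  have h3 : 0 < Nat.choose l l := Nat.choose_pos (le_refl l)
  positivity

lemma bmN_key (l m : ℕ) (hm : l + 1 ≤ m) :
    (l + 1) * bmN (l + 1) m < (m - l) * bmN l m := by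
  have hsplit : Finset.Icc l m = insert l (Finset.Icc (l + 1) m) := by
    ext x; simp [Finset.mem_Icc]; omega
  have hstep : (l + 1) * bmN (l + 1) m ≤
      (m - l) * ∑ k ∈ Finset.Icc (l + 1) m,
        2 ^ k * (Nat.choose (2 * m - 2 * k) (m - k)) * (Nat.choose (m + k) k) *
          (Nat.choose k l) := by
    unfold bmN
    rw [Finset.mul_sum, Finset.mul_sum]
    refine Finset.sum_le_sum fun k hk => ?_
    have hk' := Finset.mem_Icc.mp hk
    have hch : Nat.choose k (l + 1) * (l + 1) = Nat.choose k l * (k - l) :=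
      Nat.choose_succ_right_eq k l
    calc (l + 1) * (2 ^ k * (Nat.choose (2 * m - 2 * k) (m - k)) * (Nat.choose (m + k) k) *
          (Nat.choose k (l + 1)))
        = 2 ^ k * (Nat.choose (2 * m - 2 * k) (m - k)) * (Nat.choose (m + k) k) *
          (Nat.choose k (l + 1) * (l + 1)) := by ring
      _ = 2 ^ k * (Nat.choose (2 * m - 2 * k) (m - k)) * (Nat.choose (m + k) k) *
          (Nat.choose k l * (k - l)) := by rw [hch]
      _ ≤ 2 ^ k * (Nat.choose (2 * m - 2 * k) (m - k)) * (Nat.choose (m + k) k) *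
          (Nat.choose k l * (m - l)) := by
          exact Nat.mul_le_mul_left _ (Nat.mul_le_mul_left _ (by omega))
      _ = (m - l) * (2 ^ k * (Nat.choose (2 * m - 2 * k) (m - k)) * (Nat.choose (m + k) k) *
          (Nat.choose k l)) := by ring
  refine lt_of_le_of_lt hstep ?_
  have hpos : 0 < 2 ^ l * (Nat.choose (2 * m - 2 * l) (m - l)) * (Nat.choose (m + l) l) *
      (Nat.choose l l) := by
    have h1 : 0 < Nat.choose (2 * m - 2 * l) (m - l) := Nat.choose_pos (by omega)
    have h2 : 0 < Nat.choose (m + l) l := Nat.choose_pos (by omega)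
    have h3 : 0 < Nat.choose l l := Nat.choose_pos (le_refl l)
    positivity
  have hnotmem : l ∉ Finset.Icc (l + 1) m := by simp
  unfold bmN
  rw [hsplit, Finset.sum_insert hnotmem]
  have hml : 0 < m - l := by omega
  have hml' : 0 < m - l := hml
  nlinarith [hpos, hml']

theorem stmt_10 (l m : ℕ) (hl : 1 ≤ l) (hm : l + 1 ≤ m) :
    bmR (l+1) m / bmR l m <
      ((m:ℝ) * (2*(m:ℝ)+1) * (2*(l:ℝ)+3) +
          Real.sqrt (52*(m:ℝ)^4 + (64*(l:ℝ)^2+56)*(m:ℝ)^3 +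
            (16*(l:ℝ)^4+36*(l:ℝ)^2+13)*(m:ℝ)^2 - 8*(l:ℝ)^2*(m:ℝ) - 4*(l:ℝ)^2)) /
        (4*(m:ℝ)*((l:ℝ)^2+(l:ℝ))) := by
  have hlm : l ≤ m := by omega
  have hbpos : (0:ℝ) < bmN l m := by exact_mod_cast bmN_pos l m hlm
  have hkey := bmN_key l m hm
  have hkeyR : ((l:ℝ) + 1) * (bmN (l+1) m : ℝ) < ((m:ℝ) - l) * (bmN l m : ℝ) := by
    have := hkey
    have hc : ((m - l : ℕ) : ℝ) = (m:ℝ) - l := by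
      rw [Nat.cast_sub hlm]
    calc ((l:ℝ) + 1) * (bmN (l+1) m : ℝ) = (((l+1) * bmN (l+1) m : ℕ) : ℝ) := by push_cast; ring
      _ < (((m - l) * bmN l m : ℕ) : ℝ) := by exact_mod_cast hkey
      _ = ((m:ℝ) - l) * (bmN l m : ℝ) := by push_cast [Nat.cast_sub hlm]; ring
  have hratio : bmR (l+1) m / bmR l m < ((m:ℝ) - l) / ((l:ℝ) + 1) := by
    rw [bmR_eq, bmR_eq]
    have h2 : (0:ℝ) < (2:ℝ) ^ (2*m) := by positivity
    have heq : (bmN (l+1) m : ℝ) / 2^(2*m) / ((bmN l m : ℝ) / 2^(2*m))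
        = (bmN (l+1) m : ℝ) / (bmN l m : ℝ) := by
      field_simp
    rw [heq, div_lt_div_iff₀ hbpos (by positivity)]
    nlinarith [hkeyR]
  refine lt_of_lt_of_le hratio ?_
  have hsq : 0 ≤ Real.sqrt (52*(m:ℝ)^4 + (64*(l:ℝ)^2+56)*(m:ℝ)^3 +
      (16*(l:ℝ)^4+36*(l:ℝ)^2+13)*(m:ℝ)^2 - 8*(l:ℝ)^2*(m:ℝ) - 4*(l:ℝ)^2) :=
    Real.sqrt_nonneg _
  have hlR : (1:ℝ) ≤ l := by exact_mod_cast hl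
  have hmR : (l:ℝ) + 1 ≤ m := by exact_mod_cast hm
  rw [div_le_div_iff₀ (by positivity) (by nlinarith)]
  nlinarith [hsq, sq_nonneg ((m:ℝ) - l), mul_pos (show (0:ℝ) < m by linarith) (show (0:ℝ) < l by linarith)]
end

section
/- For all integers m ≥ 2 and 1 ≤ ℓ ≤ m−1, G₁ + G₂·√Δ₂ > 0, where G₁ = (m²+m)(12m²+24m−16ℓ⁴+28ℓ²+3), G₂ = 8m³+8m²−4ℓ²m+3m, and Δ₂ = 52m⁴+(64ℓ²+264)m³+(16ℓ⁴+228ℓ²+493)m²+(32ℓ⁴+256ℓ²+402)m+16ℓ⁴+88ℓ²+121. -/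
theorem stmt_17 (m l : ℕ) (hm : 2 ≤ m) (hl : 1 ≤ l) (hlm : l ≤ m - 1) :
    0 < ((m:ℝ)^2+(m:ℝ)) * (12*(m:ℝ)^2+24*(m:ℝ)-16*(l:ℝ)^4+28*(l:ℝ)^2+3) +
      (8*(m:ℝ)^3+8*(m:ℝ)^2-4*(l:ℝ)^2*(m:ℝ)+3*(m:ℝ)) *
        Real.sqrt (52*(m:ℝ)^4 + (64*(l:ℝ)^2+264)*(m:ℝ)^3 +
          (16*(l:ℝ)^4+228*(l:ℝ)^2+493)*(m:ℝ)^2 +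
          (32*(l:ℝ)^4+256*(l:ℝ)^2+402)*(m:ℝ) + 16*(l:ℝ)^4+88*(l:ℝ)^2+121) := by
  have hmn : l + 1 ≤ m := by omega
  have hM : (2:ℝ) ≤ (m:ℝ) := by exact_mod_cast hm
  have hL : (1:ℝ) ≤ (l:ℝ) := by exact_mod_cast hl
  have hLM : (l:ℝ) + 1 ≤ (m:ℝ) := by exact_mod_cast hmn
  set M := (m:ℝ); set L := (l:ℝ)
  set D : ℝ := 52*M^4 + (64*L^2+264)*M^3 + (16*L^4+228*L^2+493)*M^2 +
      (32*L^4+256*L^2+402)*M + 16*L^4+88*L^2+121 with hD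
  have hb : 4*L^2*(M+1) + 2*M^2 ≤ Real.sqrt D := by
    rw [show (4*L^2*(M+1) + 2*M^2 : ℝ) = Real.sqrt ((4*L^2*(M+1) + 2*M^2)^2) from
      (Real.sqrt_sq (by nlinarith)).symm]
    apply Real.sqrt_le_sqrt
    nlinarith [sq_nonneg L, sq_nonneg M, sq_nonneg (L*M), sq_nonneg (L^2*M)]
  have hsq : L^2 ≤ (M-1)^2 := by nlinarith [mul_nonneg (by linarith : (0:ℝ) ≤ M-1-L) (by linarith : (0:ℝ) ≤ M-1+L)]
  have hG2 : 0 ≤ 8*M^3+8*M^2-4*L^2*M+3*M := by nlinarith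
  have hmul : (8*M^3+8*M^2-4*L^2*M+3*M) * (4*L^2*(M+1) + 2*M^2) ≤
      (8*M^3+8*M^2-4*L^2*M+3*M) * Real.sqrt D := by
    exact mul_le_mul_of_nonneg_left hb hG2
  have hMpos : (0:ℝ) < M := by linarith
  have hL2 : (1:ℝ) ≤ L^2 := by nlinarith
  have h1 : (0:ℝ) ≤ 32*M*(M+1)*L^2*((M-1)^2 - L^2) := by
    apply mul_nonneg (by positivity) (by linarith)
  have key : 0 < (M^2+M) * (12*M^2+24*M-16*L^4+28*L^2+3) +
      (8*M^3+8*M^2-4*L^2*M+3*M) * (4*L^2*(M+1) + 2*M^2) := by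
    nlinarith [h1, mul_pos hMpos hMpos, mul_pos (mul_pos hMpos hMpos) hMpos,
      mul_le_mul_of_nonneg_left hL2 (le_of_lt (mul_pos hMpos hMpos)),
      mul_le_mul_of_nonneg_left hL2 (le_of_lt hMpos)]
  linarith
end

section
/- For every integer m ≥ 1, d_{m+1}(m+1)/d_m(m+1) = 2/(2m+3) and this ratio exceeds W(m, m+1) = (4m³+16m²+21m+9−√ω)/(4m(m+1)²), where ω = 16m⁶+96m⁵+296m⁴+520m³+581m²+402m+121; equivalently (2m+3)²·ω − (8m⁴+36m³+74m²+73m+27)² = 4(4m+3)(4m+5)(m²+6m+6) > 0. -/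
theorem stmt_18 (m : ℕ) (hm : 1 ≤ m) :
    bmR (m+1) (m+1) / bmR m (m+1) = 2 / (2*(m:ℝ)+3) ∧
    2 / (2*(m:ℝ)+3) >
      (4*(m:ℝ)^3+16*(m:ℝ)^2+21*(m:ℝ)+9 -
          Real.sqrt (16*(m:ℝ)^6+96*(m:ℝ)^5+296*(m:ℝ)^4+520*(m:ℝ)^3+
            581*(m:ℝ)^2+402*(m:ℝ)+121)) / (4*(m:ℝ)*((m:ℝ)+1)^2) ∧
    (2*(m:ℝ)+3)^2 * (16*(m:ℝ)^6+96*(m:ℝ)^5+296*(m:ℝ)^4+520*(m:ℝ)^3+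
          581*(m:ℝ)^2+402*(m:ℝ)+121) -
        (8*(m:ℝ)^4+36*(m:ℝ)^3+74*(m:ℝ)^2+73*(m:ℝ)+27)^2 =
      4*(4*(m:ℝ)+3)*(4*(m:ℝ)+5)*((m:ℝ)^2+6*(m:ℝ)+6) ∧
    0 < 4*(4*(m:ℝ)+3)*(4*(m:ℝ)+5)*((m:ℝ)^2+6*(m:ℝ)+6) := by
  have hM : (1:ℝ) ≤ (m:ℝ) := by exact_mod_cast hm
  set x : ℝ := (Nat.choose (2*m+1) m : ℝ) with hx
  have hxpos : 0 < x := by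
    have := Nat.choose_pos (show m ≤ 2*m+1 by omega)
    rw [hx]; exact_mod_cast this
  -- C(2m+2, m+1) = 2 * C(2m+1, m)
  have hch : ((Nat.choose (2*m+2) (m+1) : ℕ) : ℝ) = 2 * x := by
    have h1 : Nat.choose (2*m+2) (m+1) = Nat.choose (2*m+1) m + Nat.choose (2*m+1) (m+1) := by
      have := Nat.choose_succ_succ (2*m+1) m
      simpa [Nat.succ_eq_add_one, mul_add] using this
    have h2 : Nat.choose (2*m+1) (m+1) = Nat.choose (2*m+1) m := by
      have := Nat.choose_symm (n := 2*m+1) (k := m+1) (by omega)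
      simpa [show 2*m+1-(m+1) = m by omega] using this.symm
    rw [h1, h2]; push_cast; ring
  have hA : bmR (m+1) (m+1) = (1 / (2:ℝ) ^ (2*(m+1))) * ((2:ℝ)^(m+1) * (2*x)) := by
    rw [bmR]
    rw [show Finset.Icc (m+1) (m+1) = {m+1} from Finset.Icc_self _]
    rw [Finset.sum_singleton]
    rw [show 2*(m+1) - 2*(m+1) = 0 by omega, show (m+1) - (m+1) = 0 by omega,
        show (m+1)+(m+1) = 2*m+2 by ring, hch]
    simp
  have hB : bmR m (m+1) = (1 / (2:ℝ) ^ (2*(m+1))) * ((2:ℝ)^(m+1) * ((2*m+3) * x)) := by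
    rw [bmR]
    rw [show Finset.Icc m (m+1) = {m, m+1} by
      ext k; simp [Finset.mem_Icc]; omega]
    rw [Finset.sum_insert (by simp)]
    rw [Finset.sum_singleton]
    rw [show 2*(m+1) - 2*m = 2 by omega, show (m+1) - m = 1 by omega,
        show 2*(m+1) - 2*(m+1) = 0 by omega, show (m+1) - (m+1) = 0 by omega,
        show (m+1)+(m+1) = 2*m+2 by ring, hch,
        show (m+1)+m = 2*m+1 by ring]
    rw [Nat.choose_succ_self_right]
    simp [← hx]
    push_cast
    ring
  have h1 : bmR (m+1) (m+1) / bmR m (m+1) = 2 / (2*(m:ℝ)+3) := by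
    rw [hA, hB]
    rw [div_eq_div_iff (by positivity) (by positivity)]
    ring
  refine ⟨h1, ?_, by ring, by nlinarith⟩
  set ω : ℝ := 16*(m:ℝ)^6+96*(m:ℝ)^5+296*(m:ℝ)^4+520*(m:ℝ)^3+581*(m:ℝ)^2+402*(m:ℝ)+121 with hω
  have hωpos : 0 < ω := by rw [hω]; positivity
  have hB0 : (0:ℝ) ≤ 8*(m:ℝ)^4+36*(m:ℝ)^3+74*(m:ℝ)^2+73*(m:ℝ)+27 := by nlinarith
  have key : 8*(m:ℝ)^4+36*(m:ℝ)^3+74*(m:ℝ)^2+73*(m:ℝ)+27 < (2*(m:ℝ)+3) * Real.sqrt ω := by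
    have h2 : (8*(m:ℝ)^4+36*(m:ℝ)^3+74*(m:ℝ)^2+73*(m:ℝ)+27)^2 < ((2*(m:ℝ)+3))^2 * ω := by
      nlinarith
    have h3 := Real.sqrt_lt_sqrt (sq_nonneg _) h2
    rwa [Real.sqrt_sq hB0, Real.sqrt_mul (by positivity), Real.sqrt_sq (by positivity)] at h3
  rw [gt_iff_lt, div_lt_div_iff₀ (by positivity) (by positivity)]
  nlinarith [key]
end
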